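/- arXiv:2604.15843 — 7 statements merged into one kernel-verified Lean document; each statement's English description precedes it below -/
import Mathlib

section
/- Let X be a separable metric space equipped with a countable family of continuous finitary operations: a countable index type ι, arities n : ι → ℕ, and for each i a continuous map ω_i : (Fin (n i) → X) → X (where Fin (n i) → X carries the product topology). Let (F_m) be a sequence of nonempty closed subsets of X, each closed under every operation (for all i and all v : Fin (n i) → X with v j ∈ F_m for all j, one has ω_i v ∈ F_m), converging in the Wijsman sense to a nonempty closed subset F. Then F is closed under every operation ω_i. -/
open Metric Filter Topology

/-- Substructure variant of Wijsman closedness: if each `F m` is a nonempty closed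
subset closed under each of countably many continuous finitary operations `ω i`, and
`F m → Fl` in the Wijsman sense with `Fl` nonempty closed, then `Fl` is closed under
every operation. -/
theorem wijsman_limit_substructure {X : Type*} [MetricSpace X]
    [TopologicalSpace.SeparableSpace X]
    {ι : Type*} [Countable ι] (n : ι → ℕ) (ω : ∀ i, (Fin (n i) → X) → X)
    (hω : ∀ i, Continuous (ω i))
    (F : ℕ → Set X) (Fl : Set X)
    (hFne : ∀ m, (F m).Nonempty) (hFcl : ∀ m, IsClosed (F m))
    (hFop : ∀ m, ∀ i, ∀ v : Fin (n i) → X, (∀ j, v j ∈ F m) → ω i v ∈ F m)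
    (hFlne : Fl.Nonempty) (hFlcl : IsClosed Fl)
    (hW : ∀ y : X,
      Tendsto (fun m => infDist y (F m)) atTop (𝓝 (infDist y Fl))) :
    ∀ i, ∀ v : Fin (n i) → X, (∀ j, v j ∈ Fl) → ω i v ∈ Fl := by
  intro i v hv
  -- choose approximating points
  have hsel : ∀ m j, ∃ x ∈ F m, dist (v j) x < infDist (v j) (F m) + 1 / (m + 1) := by
    intro m j
    have h : infDist (v j) (F m) < infDist (v j) (F m) + 1 / (m + 1) := by
      have : (0 : ℝ) < 1 / (m + 1) := by positivity
      linarith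
    exact (infDist_lt_iff (hFne m)).1 h
  choose u hu hud using hsel
  -- each coordinate sequence tends to v j
  have hconv : ∀ j, Tendsto (fun m => u m j) atTop (𝓝 (v j)) := by
    intro j
    rw [tendsto_iff_dist_tendsto_zero]
    have h0 : Tendsto (fun m : ℕ => infDist (v j) (F m) + 1 / (m + 1)) atTop (𝓝 0) := by
      have h1 := hW (v j)
      rw [(hFlcl.mem_iff_infDist_zero hFlne).1 (hv j)] at h1
      have h2 : Tendsto (fun m : ℕ => 1 / ((m : ℝ) + 1)) atTop (𝓝 0) :=
        tendsto_one_div_add_atTop_nhds_zero_nat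
      simpa using h1.add h2
    refine squeeze_zero (fun m => dist_nonneg) (fun m => ?_) h0
    exact (dist_comm (u m j) (v j) ▸ (hud m j).le)
  -- the images converge
  have hwc : Tendsto (fun m => (fun j => u m j)) atTop (𝓝 v) :=
    tendsto_pi_nhds.2 hconv
  have himg : Tendsto (fun m => ω i (fun j => u m j)) atTop (𝓝 (ω i v)) :=
    ((hω i).tendsto v).comp hwc
  -- infDist (ω i v) (F m) → 0
  have hle : ∀ m, infDist (ω i v) (F m) ≤ dist (ω i v) (ω i (fun j => u m j)) := by
    intro m
    exact infDist_le_dist_of_mem (hFop m i _ (fun j => hu m j))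
  have hd0 : Tendsto (fun m => dist (ω i v) (ω i (fun j => u m j))) atTop (𝓝 0) := by
    have := tendsto_iff_dist_tendsto_zero.1 himg
    simpa [dist_comm] using this
  have hlim0 : Tendsto (fun m => infDist (ω i v) (F m)) atTop (𝓝 0) :=
    squeeze_zero (fun m => infDist_nonneg) hle hd0
  have : infDist (ω i v) Fl = 0 := tendsto_nhds_unique (hW (ω i v)) hlim0
  exact (hFlcl.mem_iff_infDist_zero hFlne).2 this
end

section
/- Equip Bool with the discrete topology and FreeGroup ℕ → Bool with the product topology. Then the set of all χ : FreeGroup ℕ → Bool such that there exists a normal subgroup N of FreeGroup ℕ with underlying set {g | χ g = true} and with the quotient group FreeGroup ℕ ⧸ N infinite is a Gδ subset of FreeGroup ℕ → Bool. -/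
instance : Countable (FreeGroup ℕ) := FreeGroup.toWord_injective.countable

private lemma isOpen_eval (g : FreeGroup ℕ) (b : Bool) :
    IsOpen {χ : FreeGroup ℕ → Bool | χ g = b} := by
  have h : {χ : FreeGroup ℕ → Bool | χ g = b} =
      (fun χ : FreeGroup ℕ → Bool => χ g) ⁻¹' {b} := rfl
  rw [h]
  exact (isOpen_discrete _).preimage (continuous_apply g)

/-- The set of codes of normal subgroups of `FreeGroup ℕ` with infinite quotient is a
`Gδ` subset of the Cantor cube `FreeGroup ℕ → Bool`. -/
theorem isGdelta_infinite_quotient_codes :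
    IsGδ {χ : FreeGroup ℕ → Bool |
      ∃ N : Subgroup (FreeGroup ℕ), N.Normal ∧
        (N : Set (FreeGroup ℕ)) = {g : FreeGroup ℕ | χ g = true} ∧
        Infinite (FreeGroup ℕ ⧸ N)} := by
  classical
  have key : {χ : FreeGroup ℕ → Bool |
      ∃ N : Subgroup (FreeGroup ℕ), N.Normal ∧
        (N : Set (FreeGroup ℕ)) = {g : FreeGroup ℕ | χ g = true} ∧
        Infinite (FreeGroup ℕ ⧸ N)} =
      ({χ : FreeGroup ℕ → Bool | χ 1 = true} ∩
       (⋂ p : FreeGroup ℕ × FreeGroup ℕ,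
          {χ : FreeGroup ℕ → Bool | χ p.1 = false} ∪ {χ | χ p.2 = false} ∪
            {χ | χ (p.1 * p.2) = true}) ∩
       (⋂ g : FreeGroup ℕ,
          {χ : FreeGroup ℕ → Bool | χ g = false} ∪ {χ | χ g⁻¹ = true}) ∩
       (⋂ p : FreeGroup ℕ × FreeGroup ℕ,
          {χ : FreeGroup ℕ → Bool | χ p.2 = false} ∪
            {χ | χ (p.1 * p.2 * p.1⁻¹) = true}) ∩
       (⋂ l : List (FreeGroup ℕ), ⋃ g : FreeGroup ℕ,
          ⋂ h ∈ l, {χ : FreeGroup ℕ → Bool | χ (h⁻¹ * g) = false})) := by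
    ext χ
    simp only [Set.mem_setOf_eq, Set.mem_inter_iff, Set.mem_iInter, Set.mem_union,
      Set.mem_iUnion]
    constructor
    · rintro ⟨N, hN, hcar, hinf⟩
      have hmem : ∀ g : FreeGroup ℕ, g ∈ N ↔ χ g = true := fun g => by
        rw [← SetLike.mem_coe, hcar]; rfl
      refine ⟨⟨⟨⟨(hmem 1).1 N.one_mem, ?_⟩, ?_⟩, ?_⟩, ?_⟩
      · intro p
        by_cases h1 : χ p.1 = true
        · by_cases h2 : χ p.2 = true
          · exact Or.inr ((hmem _).1 (N.mul_mem ((hmem _).2 h1) ((hmem _).2 h2)))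
          · exact Or.inl (Or.inr (Bool.not_eq_true _ ▸ h2))
        · exact Or.inl (Or.inl (Bool.not_eq_true _ ▸ h1))
      · intro g
        by_cases h1 : χ g = true
        · exact Or.inr ((hmem _).1 (N.inv_mem ((hmem _).2 h1)))
        · exact Or.inl (Bool.not_eq_true _ ▸ h1)
      · intro p
        by_cases h2 : χ p.2 = true
        · exact Or.inr ((hmem _).1 (hN.conj_mem _ ((hmem _).2 h2) _))
        · exact Or.inl (Bool.not_eq_true _ ▸ h2)
      · intro l
        obtain ⟨q, hq⟩ := Infinite.exists_notMem_finset
          ((l.map (QuotientGroup.mk : FreeGroup ℕ → FreeGroup ℕ ⧸ N)).toFinset)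
        refine ⟨Quotient.out q, fun h hh => ?_⟩
        by_contra hc
        have hc' : χ (h⁻¹ * Quotient.out q) = true := by
          cases hb : χ (h⁻¹ * Quotient.out q) with
          | false => exact absurd hb hc
          | true => rfl
        have : (QuotientGroup.mk h : FreeGroup ℕ ⧸ N) = q := by
          rw [← QuotientGroup.out_eq' q]
          exact (QuotientGroup.eq).2 ((hmem _).2 hc')
        exact hq (by
          rw [List.mem_toFinset, List.mem_map]
          exact ⟨h, hh, this⟩)
    · rintro ⟨⟨⟨⟨h1, h2⟩, h3⟩, h4⟩, h5⟩
      have himp : ∀ {a b : Bool}, (a = false ∨ b = true) → a = true → b = true := by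
        rintro a b (h | h) ha
        · rw [ha] at h; exact absurd h (by simp)
        · exact h
      refine ⟨{ carrier := {g | χ g = true}
                one_mem' := h1
                mul_mem' := fun {a b} ha hb => by
                  rcases h2 (a, b) with (h | h) | h
                  · exact absurd h (by simpa using ha)
                  · exact absurd h (by simpa using hb)
                  · exact h
                inv_mem' := fun {a} ha => himp (h3 a) ha }, ?_, rfl, ?_⟩
      · exact ⟨fun n hn g => himp (h4 (g, n)) hn⟩
      · set N : Subgroup (FreeGroup ℕ) :=
          { carrier := {g | χ g = true}
            one_mem' := h1
            mul_mem' := fun {a b} ha hb => by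
              rcases h2 (a, b) with (h | h) | h
              · exact absurd h (by simpa using ha)
              · exact absurd h (by simpa using hb)
              · exact h
            inv_mem' := fun {a} ha => himp (h3 a) ha } with hNdef
        by_contra hfin
        rw [not_infinite_iff_finite] at hfin
        have := Fintype.ofFinite (FreeGroup ℕ ⧸ N)
        set l : List (FreeGroup ℕ) :=
          (Finset.univ : Finset (FreeGroup ℕ ⧸ N)).toList.map Quotient.out with hl
        obtain ⟨g, hg⟩ := h5 l
        have hgmem : ∃ h ∈ l, (QuotientGroup.mk h : FreeGroup ℕ ⧸ N) = QuotientGroup.mk g := by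
          refine ⟨Quotient.out (QuotientGroup.mk g : FreeGroup ℕ ⧸ N), ?_, ?_⟩
          · rw [hl, List.mem_map]
            exact ⟨QuotientGroup.mk g, Finset.mem_toList.2 (Finset.mem_univ _), rfl⟩
          · exact QuotientGroup.out_eq' _
        obtain ⟨h, hhl, hhq⟩ := hgmem
        have hmemN : h⁻¹ * g ∈ N := (QuotientGroup.eq).1 hhq
        have : χ (h⁻¹ * g) = true := hmemN
        rw [hg h hhl] at this
        exact absurd this (by simp)
  rw [key]
  refine IsGδ.inter (IsGδ.inter (IsGδ.inter (IsGδ.inter ?_ ?_) ?_) ?_) ?_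
  · exact (isOpen_eval 1 true).isGδ
  · exact IsGδ.iInter fun p =>
      (((isOpen_eval _ _).union (isOpen_eval _ _)).union (isOpen_eval _ _)).isGδ
  · exact IsGδ.iInter fun g => ((isOpen_eval _ _).union (isOpen_eval _ _)).isGδ
  · exact IsGδ.iInter fun p => ((isOpen_eval _ _).union (isOpen_eval _ _)).isGδ
  · exact IsGδ.iInter fun l => (isOpen_iUnion fun g =>
      (List.finite_toSet l).isOpen_biInter fun h _ => isOpen_eval _ _).isGδ
end

section
/- Equip Bool with the discrete topology, FreeGroup ℕ → Bool with the product topology, and ℕ → Bool with the product topology. Then: (a) the set of all χ : FreeGroup ℕ → Bool such that some normal subgroup N of FreeGroup ℕ has underlying set {g | χ g = true} and the quotient group FreeGroup ℕ ⧸ N is finite, is an Fσ subset of FreeGroup ℕ → Bool; and (b) there exists a continuous map f : (ℕ → Bool) → (FreeGroup ℕ → Bool) such that for every α : ℕ → Bool the set {g | f α g = true} is the underlying set of a normal subgroup N_α of FreeGroup ℕ, and the quotient FreeGroup ℕ ⧸ N_α is finite if and only if the set {n : ℕ | α n = true} is finite. (Since the set of sequences with only finitely many values true is the canonical Σ⁰₂-complete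 subset of the Cantor space, (a) and (b) together say that finiteness of the quotient is Σ⁰₂-complete in this coding.) -/
open Classical in
noncomputable def psiAux (α : ℕ → Bool) : FreeGroup ℕ →* Multiplicative (ℕ → ZMod 2) :=
  FreeGroup.lift fun n => if α n = true then Multiplicative.ofAdd (Pi.single n 1) else 1

lemma psiAux_congr {α β : ℕ → Bool} (g : FreeGroup ℕ)
    (h : ∀ n ∈ g.toWord.map Prod.fst, α n = β n) : psiAux α g = psiAux β g := by
  conv_lhs => rw [← FreeGroup.mk_toWord (x := g)]
  conv_rhs => rw [← FreeGroup.mk_toWord (x := g)]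
  rw [psiAux, psiAux, FreeGroup.lift_mk, FreeGroup.lift_mk]
  congr 1
  refine List.map_congr_left fun x hx => ?_
  have : α x.1 = β x.1 := h x.1 (List.mem_map_of_mem hx)
  rw [this]

lemma closedAux {ι : Type} [Finite ι] (t : ι → FreeGroup ℕ) (P : (ι → Bool) → Prop) :
    IsClosed {χ : FreeGroup ℕ → Bool | P fun i => χ (t i)} := by
  have h : {χ : FreeGroup ℕ → Bool | P fun i => χ (t i)} =
      (fun χ (i : ι) => χ (t i)) ⁻¹' {v | P v} := rfl
  rw [h]
  exact (isClosed_discrete _).preimage (continuous_pi fun i => continuous_apply (t i))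

noncomputable def Aset (n : ℕ) : Set (FreeGroup ℕ → Bool) :=
  {χ | χ 1 = true ∧ (∀ a b, χ a = true → χ b = true → χ (a * b) = true) ∧
    (∀ a, χ a = true → χ a⁻¹ = true) ∧ (∀ a b, χ a = true → χ (b * a * b⁻¹) = true) ∧
    ∀ g : Fin (n + 1) → FreeGroup ℕ, ∃ i j, i ≠ j ∧ χ ((g i)⁻¹ * g j) = true}

lemma Aset_closed (n : ℕ) : IsClosed (Aset n) := by
  have h1 : IsClosed {χ : FreeGroup ℕ → Bool | χ 1 = true} :=
    closedAux (ι := Unit) (fun _ => 1) (fun v => v () = true)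
  have h2 : IsClosed {χ : FreeGroup ℕ → Bool |
      ∀ a b, χ a = true → χ b = true → χ (a * b) = true} := by
    rw [Set.setOf_forall]
    refine isClosed_iInter fun a => ?_
    rw [Set.setOf_forall]
    exact isClosed_iInter fun b =>
      closedAux (ι := Fin 3) ![a, b, a * b] (fun v => v 0 = true → v 1 = true → v 2 = true)
  have h3 : IsClosed {χ : FreeGroup ℕ → Bool | ∀ a, χ a = true → χ a⁻¹ = true} := by
    rw [Set.setOf_forall]
    exact isClosed_iInter fun a =>
      closedAux (ι := Fin 2) ![a, a⁻¹] (fun v => v 0 = true → v 1 = true)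
  have h4 : IsClosed {χ : FreeGroup ℕ → Bool | ∀ a b, χ a = true → χ (b * a * b⁻¹) = true} := by
    rw [Set.setOf_forall]
    refine isClosed_iInter fun a => ?_
    rw [Set.setOf_forall]
    exact isClosed_iInter fun b =>
      closedAux (ι := Fin 2) ![a, b * a * b⁻¹] (fun v => v 0 = true → v 1 = true)
  have h5 : IsClosed {χ : FreeGroup ℕ → Bool |
      ∀ g : Fin (n + 1) → FreeGroup ℕ, ∃ i j, i ≠ j ∧ χ ((g i)⁻¹ * g j) = true} := by
    rw [Set.setOf_forall]
    exact isClosed_iInter fun g =>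
      closedAux (ι := Fin (n + 1) × Fin (n + 1)) (fun p => (g p.1)⁻¹ * g p.2)
        (fun v => ∃ i j, i ≠ j ∧ v (i, j) = true)
  rw [Aset, Set.setOf_and, Set.setOf_and, Set.setOf_and, Set.setOf_and]
  exact h1.inter (h2.inter (h3.inter (h4.inter h5)))

lemma Aset_eq :
    {χ : FreeGroup ℕ → Bool |
      ∃ N : Subgroup (FreeGroup ℕ), N.Normal ∧
        (N : Set (FreeGroup ℕ)) = {g : FreeGroup ℕ | χ g = true} ∧
        Finite (FreeGroup ℕ ⧸ N)} = ⋃ n, Aset n := by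
  ext χ
  simp only [Set.mem_setOf_eq, Set.mem_iUnion]
  constructor
  · rintro ⟨N, hN, hset, hfin⟩
    have hmem : ∀ g, g ∈ N ↔ χ g = true := fun g => Set.ext_iff.mp hset g
    haveI := Fintype.ofFinite (FreeGroup ℕ ⧸ N)
    refine ⟨Fintype.card (FreeGroup ℕ ⧸ N), (hmem 1).1 N.one_mem,
      fun a b ha hb => (hmem _).1 (N.mul_mem ((hmem a).2 ha) ((hmem b).2 hb)),
      fun a ha => (hmem _).1 (N.inv_mem ((hmem a).2 ha)),
      fun a b ha => (hmem _).1 (hN.conj_mem a ((hmem a).2 ha) b), fun g => ?_⟩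
    obtain ⟨i, j, hij, hgij⟩ := Fintype.exists_ne_map_eq_of_card_lt
      (fun i : Fin (Fintype.card (FreeGroup ℕ ⧸ N) + 1) => ((g i : FreeGroup ℕ ⧸ N)))
      (by simp)
    exact ⟨i, j, hij, (hmem _).1 (QuotientGroup.eq.1 hgij)⟩
  · rintro ⟨n, h1, h2, h3, h4, h5⟩
    let N : Subgroup (FreeGroup ℕ) :=
      { carrier := {g | χ g = true}
        one_mem' := h1
        mul_mem' := fun ha hb => h2 _ _ ha hb
        inv_mem' := fun ha => h3 _ ha }
    refine ⟨N, ⟨fun a ha b => h4 a b ha⟩, rfl, ?_⟩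
    by_contra hF
    rw [not_finite_iff_infinite] at hF
    set e := Infinite.natEmbedding (FreeGroup ℕ ⧸ N)
    obtain ⟨i, j, hij, hm⟩ := h5 (fun i : Fin (n + 1) => (e i).out)
    refine hij (Fin.val_injective (e.injective ?_))
    rw [← QuotientGroup.out_eq' (e i), ← QuotientGroup.out_eq' (e j)]
    exact QuotientGroup.eq.2 hm

open Classical in
noncomputable def fRed : (ℕ → Bool) → (FreeGroup ℕ → Bool) :=
  fun α g => if psiAux α g = 1 then true else false

lemma fRed_eq_true {α : ℕ → Bool} {g : FreeGroup ℕ} : fRed α g = true ↔ psiAux α g = 1 := by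
  rw [fRed]
  split <;> simp_all

lemma fRed_continuous : Continuous fRed := by
  refine continuous_pi fun g => ?_
  classical
  set L : Finset ℕ := (g.toWord.map Prod.fst).toFinset with hL
  have key : (fun α => fRed α g) =
      (fun u : {x // x ∈ L} → Bool =>
        fRed (fun n => if h : n ∈ L then u ⟨n, h⟩ else false) g) ∘
      (fun α (l : {x // x ∈ L}) => α l.1) := by
    funext α
    simp only [Function.comp]
    have : psiAux (fun n => if h : n ∈ L then α n else false) g = psiAux α g := by
      refine psiAux_congr g fun n hn => ?_
      have hnL : n ∈ L := by rw [hL]; exact List.mem_toFinset.2 hn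
      simp [hnL]
    simp only [fRed, this]
  rw [key]
  exact (continuous_of_discreteTopology).comp (continuous_pi fun l => continuous_apply _)

lemma psiAux_of {α : ℕ → Bool} {n : ℕ} :
    psiAux α (FreeGroup.of n) =
      (if α n = true then Multiplicative.ofAdd (Pi.single n 1) else 1) := by
  rw [psiAux, FreeGroup.lift_apply_of]

lemma range_le {α : ℕ → Bool} {m : ℕ} (hm : α m = false) (g : FreeGroup ℕ) :
    Multiplicative.toAdd (psiAux α g) m = 0 := by
  induction g using FreeGroup.induction_on with
  | C1 => simp
  | of n =>
      show Multiplicative.toAdd (psiAux α (FreeGroup.of n)) m = 0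
      rw [psiAux_of]
      split
      · next h =>
          have : n ≠ m := fun e => by rw [e, hm] at h; exact Bool.false_ne_true h
          simp [Pi.single_apply, this]
      · simp
  | inv_of n ih =>
      rw [map_inv]
      simpa using congrArg Neg.neg ih
  | mul a b ha hb =>
      rw [map_mul]
      simp only [toAdd_mul, Pi.add_apply, ha, hb, add_zero]

lemma finite_iff {α : ℕ → Bool} :
    Finite (FreeGroup ℕ ⧸ (psiAux α).ker) ↔ {n : ℕ | α n = true}.Finite := by
  rw [(QuotientGroup.quotientKerEquivRange (psiAux α)).toEquiv.finite_iff]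
  constructor
  · intro hfin
    by_contra hinf
    have hinf' : {n : ℕ | α n = true}.Infinite := hinf
    haveI := hinf'.to_subtype
    have hinj : Function.Injective (fun s : ↥{n : ℕ | α n = true} =>
        (⟨psiAux α (FreeGroup.of s.1), ⟨FreeGroup.of s.1, rfl⟩⟩ : (psiAux α).range)) := by
      rintro ⟨s, hs⟩ ⟨t, ht⟩ hst
      have h1 : psiAux α (FreeGroup.of s) = psiAux α (FreeGroup.of t) :=
        congrArg Subtype.val hst
      rw [psiAux_of, psiAux_of, if_pos (show α s = true from hs), if_pos (show α t = true from ht)] at h1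
      have h2 : (Pi.single s 1 : ℕ → ZMod 2) = Pi.single t 1 :=
        Multiplicative.ofAdd.injective h1
      by_contra hne
      have hne' : s ≠ t := fun e => hne (by simpa using e)
      have := congrFun h2 s
      rw [Pi.single_eq_same, Pi.single_eq_of_ne hne'] at this
      exact one_ne_zero this
    haveI := Infinite.of_injective _ hinj
    exact not_finite ↥(psiAux α).range
  · intro hS
    haveI := hS.to_subtype
    haveI : Finite ((↥{n : ℕ | α n = true}) → ZMod 2) := inferInstance
    refine Finite.of_injective
      (fun x : (psiAux α).range => fun s : ↥{n : ℕ | α n = true} =>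
        Multiplicative.toAdd x.1 s.1) ?_
    rintro ⟨x, gx, hx⟩ ⟨y, gy, hy⟩ hxy
    simp only at hxy
    ext1
    have : Multiplicative.toAdd x = Multiplicative.toAdd y := by
      funext m
      by_cases hm : α m = true
      · exact congrFun hxy ⟨m, hm⟩
      · rw [← hx, ← hy, range_le (Bool.not_eq_true _ ▸ hm) gx,
          range_le (Bool.not_eq_true _ ▸ hm) gy]
    exact Multiplicative.toAdd.injective this


/-- (a) Finiteness of the quotient group is an `Fσ` class in the coding of countable
groups by normal subgroups of `FreeGroup ℕ`; (b) it is `Σ⁰₂`-hard: the canonical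
`Σ⁰₂`-complete set of eventually-zero binary sequences continuously reduces to it. -/
theorem finite_quotient_sigma02_complete :
    (∃ A : ℕ → Set (FreeGroup ℕ → Bool), (∀ n, IsClosed (A n)) ∧
      {χ : FreeGroup ℕ → Bool |
        ∃ N : Subgroup (FreeGroup ℕ), N.Normal ∧
          (N : Set (FreeGroup ℕ)) = {g : FreeGroup ℕ | χ g = true} ∧
          Finite (FreeGroup ℕ ⧸ N)} = ⋃ n, A n) ∧
    (∃ f : (ℕ → Bool) → (FreeGroup ℕ → Bool), Continuous f ∧
      ∀ α : ℕ → Bool, ∃ N : Subgroup (FreeGroup ℕ), N.Normal ∧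
        (N : Set (FreeGroup ℕ)) = {g : FreeGroup ℕ | f α g = true} ∧
        (Finite (FreeGroup ℕ ⧸ N) ↔ {n : ℕ | α n = true}.Finite)) := by
  refine ⟨⟨Aset, Aset_closed, Aset_eq⟩,
    ⟨fRed, fRed_continuous, fun α => ⟨(psiAux α).ker, MonoidHom.normal_ker _, ?_, finite_iff⟩⟩⟩
  ext g
  simp [MonoidHom.mem_ker, fRed_eq_true]
end

section
/- Equip Bool with the discrete topology, (ℕ →₀ ℤ) → Bool with the product topology, and ℕ → Bool with the product topology. Then: (a) the set of all χ : (ℕ →₀ ℤ) → Bool such that some additive subgroup H of ℕ →₀ ℤ has underlying set {x | χ x = true} and the quotient group (ℕ →₀ ℤ) ⧸ H is a torsion group, is a Gδ subset of (ℕ →₀ ℤ) → Bool; and (b) there exists a continuous map f : (ℕ → Bool) → ((ℕ →₀ ℤ) → Bool) such that for every α : ℕ → Bool the set {x | f α x = true} is the underlying set of an additive subgroup H_α of ℕ →₀ ℤ, and the quotient (ℕ →₀ ℤ) ⧸ H_α is a torsion group if and only if the set {n : ℕ | α n = true} is infinite. (Since the set of sequences with infinitely many values true is the canonical Π⁰₂-complete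 subset of the Cantor space, (a) and (b) together say that being a torsion group is Π⁰₂-complete in this coding.) -/
namespace TorsionPi02

/-- The coding homomorphism: `e_{⟨k,i⟩} ↦ 2^i · e_k`. -/
noncomputable def phi : (ℕ →₀ ℤ) →+ (ℕ →₀ ℤ) :=
  Finsupp.liftAddHom fun j =>
    (Finsupp.singleAddHom (Nat.unpair j).1).comp
      (AddMonoidHom.mulRight ((2 : ℤ) ^ (Nat.unpair j).2))

lemma phi_single (j : ℕ) (c : ℤ) :
    phi (Finsupp.single j c) =
      Finsupp.single (Nat.unpair j).1 (c * 2 ^ (Nat.unpair j).2) := by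
  simp [phi]

lemma phi_surjective : Function.Surjective phi := by
  intro y
  refine ⟨Finsupp.mapDomain (fun k => Nat.pair k 0) y, ?_⟩
  have : phi.comp (Finsupp.mapDomain.addMonoidHom (fun k => Nat.pair k 0)) =
      AddMonoidHom.id (ℕ →₀ ℤ) := by
    apply Finsupp.addHom_ext
    intro k c
    simp [Finsupp.mapDomain.addMonoidHom_apply, Finsupp.mapDomain_single, phi_single]
  have := DFunLike.congr_fun this y
  simpa [Finsupp.mapDomain.addMonoidHom_apply] using this

/-- Per-coordinate divisibility predicate. -/
def P (α : ℕ → Bool) (k : ℕ) (z : ℤ) : Prop :=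
  z = 0 ∨ ∃ i, k ≤ i ∧ α i = true ∧ (2 : ℤ) ^ i ∣ z

lemma P_add {α : ℕ → Bool} {k : ℕ} {a b : ℤ} (ha : P α k a) (hb : P α k b) :
    P α k (a + b) := by
  rcases ha with rfl | ⟨i, hki, hαi, hdvd⟩
  · simpa using hb
  rcases hb with rfl | ⟨i', hki', hαi', hdvd'⟩
  · exact Or.inr ⟨i, hki, hαi, by simpa using hdvd⟩
  rcases le_total i i' with h | h
  · exact Or.inr ⟨i, hki, hαi, dvd_add hdvd (dvd_trans (pow_dvd_pow _ h) hdvd')⟩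
  · exact Or.inr ⟨i', hki', hαi', dvd_add (dvd_trans (pow_dvd_pow _ h) hdvd) hdvd'⟩

lemma P_neg {α : ℕ → Bool} {k : ℕ} {a : ℤ} (ha : P α k a) : P α k (-a) := by
  rcases ha with rfl | ⟨i, hki, hαi, hdvd⟩
  · simp [P]
  · exact Or.inr ⟨i, hki, hαi, hdvd.neg_right⟩

/-- Subgroup of targets. -/
noncomputable def K (α : ℕ → Bool) : AddSubgroup (ℕ →₀ ℤ) where
  carrier := {y | ∀ k, P α k (y k)}
  zero_mem' := fun k => Or.inl (by simp)
  add_mem' := by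
    intro a b ha hb k
    simpa using P_add (ha k) (hb k)
  neg_mem' := by
    intro a ha k
    simpa using P_neg (ha k)

noncomputable def Hgrp (α : ℕ → Bool) : AddSubgroup (ℕ →₀ ℤ) := (K α).comap phi

lemma mem_Hgrp {α : ℕ → Bool} {x : ℕ →₀ ℤ} :
    x ∈ Hgrp α ↔ ∀ k, P α k (phi x k) := Iff.rfl

/-- Torsion of a quotient in elementary terms. -/
lemma torsion_iff (H : AddSubgroup (ℕ →₀ ℤ)) :
    AddMonoid.IsTorsion ((ℕ →₀ ℤ) ⧸ H) ↔ ∀ x : ℕ →₀ ℤ, ∃ n : ℕ, 0 < n ∧ n • x ∈ H := by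
  constructor
  · intro ht x
    obtain ⟨n, hn, h0⟩ := isOfFinAddOrder_iff_nsmul_eq_zero.1 (ht (QuotientAddGroup.mk x))
    refine ⟨n, hn, ?_⟩
    rwa [← QuotientAddGroup.mk_nsmul, QuotientAddGroup.eq_zero_iff] at h0
  · intro h q
    obtain ⟨x, rfl⟩ := QuotientAddGroup.mk_surjective q
    obtain ⟨n, hn, hx⟩ := h x
    exact isOfFinAddOrder_iff_nsmul_eq_zero.2
      ⟨n, hn, by rw [← QuotientAddGroup.mk_nsmul, QuotientAddGroup.eq_zero_iff]; exact hx⟩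

lemma torsion_Hgrp_iff (α : ℕ → Bool) :
    AddMonoid.IsTorsion ((ℕ →₀ ℤ) ⧸ Hgrp α) ↔ {n : ℕ | α n = true}.Infinite := by
  rw [torsion_iff]
  have key : (∀ x : ℕ →₀ ℤ, ∃ n : ℕ, 0 < n ∧ n • x ∈ Hgrp α) ↔
      (∀ y : ℕ →₀ ℤ, ∃ n : ℕ, 0 < n ∧ n • y ∈ K α) := by
    constructor
    · intro h y
      obtain ⟨x, rfl⟩ := phi_surjective y
      obtain ⟨n, hn, hx⟩ := h x
      exact ⟨n, hn, by rwa [← map_nsmul]⟩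
    · intro h x
      obtain ⟨n, hn, hy⟩ := h (phi x)
      exact ⟨n, hn, by simpa [Hgrp, AddSubgroup.mem_comap, map_nsmul] using hy⟩
  rw [key]
  constructor
  · intro h
    by_contra hfin
    rw [Set.not_infinite] at hfin
    obtain ⟨N, hN⟩ := hfin.bddAbove
    obtain ⟨n, hn, hy⟩ := h (Finsupp.single (N + 1) 1)
    rw [← natCast_zsmul] at hy
    have := hy (N + 1)
    rcases this with h0 | ⟨i, hki, hαi, _⟩
    · rw [Finsupp.smul_apply, Finsupp.single_eq_same, smul_eq_mul, mul_one] at h0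
      exact absurd h0 (by exact_mod_cast hn.ne')
    · exact absurd (hN hαi) (by omega)
  · intro hinf y
    have hex : ∀ k : ℕ, ∃ i, k ≤ i ∧ α i = true := by
      intro k
      obtain ⟨i, hi, hik⟩ := hinf.exists_gt k
      exact ⟨i, hik.le, hi⟩
    choose g hg1 hg2 using hex
    refine ⟨2 ^ (y.support.sup g), by positivity, ?_⟩
    rw [← natCast_zsmul]
    intro k
    by_cases hk : y k = 0
    · exact Or.inl (by simp [hk])
    · have hks : k ∈ y.support := Finsupp.mem_support_iff.2 hk
      refine Or.inr ⟨g k, hg1 k, hg2 k, ?_⟩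
      rw [Finsupp.smul_apply, smul_eq_mul]
      refine Dvd.dvd.mul_right ?_ _
      have h2 : (2 : ℤ) ^ g k ∣ (2 : ℤ) ^ (y.support.sup g) :=
        pow_dvd_pow (2 : ℤ) (Finset.le_sup (f := g) hks)
      exact_mod_cast h2
  -- end

/-- The reduction map. -/
noncomputable def f (α : ℕ → Bool) (x : ℕ →₀ ℤ) : Bool :=
  decide (∀ k ∈ (phi x).support,
    ∃ i ∈ Finset.range ((phi x k).natAbs + 1), k ≤ i ∧ α i = true ∧ (2 : ℤ) ^ i ∣ phi x k)

lemma mem_Hgrp_iff_f {α : ℕ → Bool} {x : ℕ →₀ ℤ} :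
    x ∈ Hgrp α ↔ f α x = true := by
  rw [mem_Hgrp, f, decide_eq_true_eq]
  constructor
  · intro h k hk
    have hz : phi x k ≠ 0 := Finsupp.mem_support_iff.1 hk
    rcases h k with h0 | ⟨i, hki, hαi, hdvd⟩
    · exact absurd h0 hz
    refine ⟨i, Finset.mem_range.2 ?_, hki, hαi, hdvd⟩
    have h1 : (2 : ℕ) ^ i ≤ (phi x k).natAbs := by
      refine Nat.le_of_dvd (Int.natAbs_pos.2 hz) ?_
      have := Int.natAbs_dvd_natAbs.2 hdvd
      simpa [Int.natAbs_pow] using this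
    have := (Nat.lt_two_pow_self (n := i)).le.trans h1
    omega
  · intro h k
    by_cases hz : phi x k = 0
    · exact Or.inl hz
    · obtain ⟨i, _, hki, hαi, hdvd⟩ := h k (Finsupp.mem_support_iff.2 hz)
      exact Or.inr ⟨i, hki, hαi, hdvd⟩

lemma coe_Hgrp (α : ℕ → Bool) :
    (Hgrp α : Set (ℕ →₀ ℤ)) = {x : ℕ →₀ ℤ | f α x = true} :=
  Set.ext fun _ => mem_Hgrp_iff_f

/-- Functions depending on finitely many coordinates are continuous. -/
lemma continuous_of_dep (g : (ℕ → Bool) → Bool) (N : ℕ)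
    (h : ∀ α β : ℕ → Bool, (∀ i ≤ N, α i = β i) → g α = g β) : Continuous g := by
  have hg : g = (fun v : Fin (N + 1) → Bool =>
      g (fun i => if hi : i < N + 1 then v ⟨i, hi⟩ else false)) ∘
      (fun α (i : Fin (N + 1)) => α i.1) := by
    funext α
    exact h α _ (fun i hi => by simp [Nat.lt_succ_of_le hi])
  rw [hg]
  exact Continuous.comp continuous_of_discreteTopology
    (continuous_pi fun i => continuous_apply _)

lemma f_dep (x : ℕ →₀ ℤ) (α β : ℕ → Bool)
    (h : ∀ i ≤ (phi x).support.sup (fun k => (phi x k).natAbs), α i = β i) :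
    f α x = f β x := by
  have key : ∀ γ δ : ℕ → Bool, (∀ i ≤ (phi x).support.sup (fun k => (phi x k).natAbs),
      γ i = δ i) → f γ x = true → f δ x = true := by
    intro γ δ hγδ hf
    rw [f, decide_eq_true_eq] at hf ⊢
    intro k hk
    obtain ⟨i, hir, hki, hγi, hdvd⟩ := hf k hk
    refine ⟨i, hir, hki, ?_, hdvd⟩
    rw [← hγδ i ?_]
    · exact hγi
    · have : i ≤ (phi x k).natAbs := by
        have := Finset.mem_range.1 hir; omega
      exact this.trans (Finset.le_sup (f := fun k => (phi x k).natAbs) hk)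
  by_cases ha : f α x = true
  · exact ha.trans (key α β h ha).symm
  · have hb : f β x ≠ true := fun hb => ha (key β α (fun i hi => (h i hi).symm) hb)
    rw [Bool.eq_false_iff.2 hb, Bool.eq_false_iff.2 ha]

lemma continuous_f : Continuous f := by
  apply continuous_pi
  intro x
  exact continuous_of_dep (fun α => f α x) _ (fun α β h => f_dep x α β h)

end TorsionPi02

open TorsionPi02 in
/-- (a) Being a torsion group is a `Gδ` class in the coding of countable abelian groups
by subgroups of `ℕ →₀ ℤ`; (b) it is `Π⁰₂`-hard: the canonical `Π⁰₂`-complete set of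
binary sequences with infinitely many `true` values continuously reduces to it. -/
theorem torsion_quotient_pi02_complete :
    (IsGδ {χ : (ℕ →₀ ℤ) → Bool |
      ∃ H : AddSubgroup (ℕ →₀ ℤ),
        (H : Set (ℕ →₀ ℤ)) = {x : ℕ →₀ ℤ | χ x = true} ∧
        AddMonoid.IsTorsion ((ℕ →₀ ℤ) ⧸ H)}) ∧
    (∃ f : (ℕ → Bool) → ((ℕ →₀ ℤ) → Bool), Continuous f ∧
      ∀ α : ℕ → Bool, ∃ H : AddSubgroup (ℕ →₀ ℤ),
        (H : Set (ℕ →₀ ℤ)) = {x : ℕ →₀ ℤ | f α x = true} ∧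
        (AddMonoid.IsTorsion ((ℕ →₀ ℤ) ⧸ H) ↔ {n : ℕ | α n = true}.Infinite)) := by
  constructor
  · -- part (a)
    have hset : {χ : (ℕ →₀ ℤ) → Bool |
        ∃ H : AddSubgroup (ℕ →₀ ℤ),
          (H : Set (ℕ →₀ ℤ)) = {x : ℕ →₀ ℤ | χ x = true} ∧
          AddMonoid.IsTorsion ((ℕ →₀ ℤ) ⧸ H)} =
        ({χ : (ℕ →₀ ℤ) → Bool | χ 0 = true} ∩
         (⋂ p : (ℕ →₀ ℤ) × (ℕ →₀ ℤ),
           {χ : (ℕ →₀ ℤ) → Bool | χ p.1 = false} ∪ {χ | χ p.2 = false} ∪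
             {χ | χ (p.1 + p.2) = true}) ∩
         (⋂ x : ℕ →₀ ℤ, {χ : (ℕ →₀ ℤ) → Bool | χ x = false} ∪ {χ | χ (-x) = true}) ∩
         (⋂ x : ℕ →₀ ℤ, ⋃ n : ℕ, {χ : (ℕ →₀ ℤ) → Bool | χ ((n + 1) • x) = true})) := by
      ext χ
      simp only [Set.mem_setOf_eq, Set.mem_inter_iff, Set.mem_iInter, Set.mem_union,
        Set.mem_iUnion]
      constructor
      · rintro ⟨H, hH, ht⟩
        have hmem : ∀ x : ℕ →₀ ℤ, x ∈ H ↔ χ x = true := fun x =>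
          Set.ext_iff.1 hH x
        refine ⟨⟨⟨(hmem 0).1 H.zero_mem, ?_⟩, ?_⟩, ?_⟩
        · rintro ⟨x, y⟩
          by_cases hx : χ x = true
          · by_cases hy : χ y = true
            · exact Or.inr ((hmem _).1 (H.add_mem ((hmem _).2 hx) ((hmem _).2 hy)))
            · exact Or.inl (Or.inr (Bool.not_eq_true _ ▸ hy))
          · exact Or.inl (Or.inl (Bool.not_eq_true _ ▸ hx))
        · intro x
          by_cases hx : χ x = true
          · exact Or.inr ((hmem _).1 (H.neg_mem ((hmem _).2 hx)))
          · exact Or.inl (Bool.not_eq_true _ ▸ hx)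
        · intro x
          obtain ⟨n, hn, hnx⟩ := (torsion_iff H).1 ht x
          obtain ⟨m, rfl⟩ : ∃ m, n = m + 1 := ⟨n - 1, by omega⟩
          exact ⟨m, (hmem _).1 hnx⟩
      · rintro ⟨⟨⟨h0, hadd⟩, hneg⟩, htor⟩
        refine ⟨{ carrier := {x | χ x = true}
                  zero_mem' := h0
                  add_mem' := ?_
                  neg_mem' := ?_ }, rfl, ?_⟩
        · intro a b ha hb
          rcases hadd (a, b) with (h | h) | h
          · exact absurd ha (by simp [h])
          · exact absurd hb (by simp [h])
          · exact h
        · intro a ha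
          rcases hneg a with h | h
          · exact absurd ha (by simp [h])
          · exact h
        · rw [torsion_iff]
          intro x
          obtain ⟨n, hn⟩ := htor x
          exact ⟨n + 1, by omega, hn⟩
    rw [hset]
    have hclopen : ∀ (v : ℕ →₀ ℤ) (b : Bool),
        IsOpen {χ : (ℕ →₀ ℤ) → Bool | χ v = b} := by
      intro v b
      have he : {χ : (ℕ →₀ ℤ) → Bool | χ v = b} =
          (fun χ : (ℕ →₀ ℤ) → Bool => χ v) ⁻¹' {b} := rfl
      rw [he]
      exact IsOpen.preimage (continuous_apply v) (isOpen_discrete {b})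
    refine IsGδ.inter (IsGδ.inter (IsGδ.inter ?_ ?_) ?_) ?_
    · exact (hclopen 0 true).isGδ
    · exact IsGδ.iInter fun p =>
        (((hclopen p.1 false).union (hclopen p.2 false)).union
          (hclopen (p.1 + p.2) true)).isGδ
    · exact IsGδ.iInter fun x => ((hclopen x false).union (hclopen (-x) true)).isGδ
    · exact IsGδ.iInter fun x =>
        (isOpen_iUnion fun n => hclopen ((n + 1) • x) true).isGδ
  · -- part (b)
    exact ⟨f, continuous_f, fun α => ⟨Hgrp α, coe_Hgrp α, torsion_Hgrp_iff α⟩⟩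
end

section
/- Equip Bool with the discrete topology, (ℕ →₀ ℤ) → Bool with the product topology, and ℕ → Bool with the product topology. Then: (a) the set of all χ : (ℕ →₀ ℤ) → Bool such that some additive subgroup H of ℕ →₀ ℤ has underlying set {x | χ x = true} and the quotient group (ℕ →₀ ℤ) ⧸ H is divisible, is a Gδ subset of (ℕ →₀ ℤ) → Bool; and (b) there exists a continuous map f : (ℕ → Bool) → ((ℕ →₀ ℤ) → Bool) such that for every α : ℕ → Bool the set {x | f α x = true} is the underlying set of an additive subgroup J_α of ℕ →₀ ℤ, and the quotient (ℕ →₀ ℤ) ⧸ J_α is divisible if and only if the set {n : ℕ | α n = true} is infinite. (Since the set of sequences with infinitely many values true is the canonical Π⁰₂-complete subset of the Cantor space, (a) and (b) together say that divisibility is Π⁰₂-complete in this coding.) -/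
/-- An additive abelian group is divisible if every element is divisible by every
positive natural number. -/
def IsDivisibleGroup (A : Type*) [AddCommGroup A] : Prop :=
  ∀ a : A, ∀ n : ℕ, 1 ≤ n → ∃ b : A, n • b = a

namespace Pi02Aux

open Finset

lemma div_quot_iff {G : Type*} [AddCommGroup G] (H : AddSubgroup G) :
    IsDivisibleGroup (G ⧸ H) ↔ ∀ x : G, ∀ n : ℕ, 1 ≤ n → ∃ b : G, n • b - x ∈ H := by
  constructor
  · intro h x n hn
    obtain ⟨b', hb'⟩ := h (QuotientAddGroup.mk x) n hn
    obtain ⟨b, rfl⟩ := QuotientAddGroup.mk_surjective b'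
    exact ⟨b, (QuotientAddGroup.eq_iff_sub_mem).mp hb'⟩
  · intro h q n hn
    obtain ⟨x, rfl⟩ := QuotientAddGroup.mk_surjective q
    obtain ⟨b, hb⟩ := h x n hn
    exact ⟨QuotientAddGroup.mk b, (QuotientAddGroup.eq_iff_sub_mem).mpr hb⟩

def cc (α : ℕ → Bool) (k : ℕ) : ℕ := if α k then (k + 1).factorial else 1

def DD (α : ℕ → Bool) (n : ℕ) : ℕ := ∏ k ∈ Finset.range n, cc α k

lemma cc_pos (α : ℕ → Bool) (k : ℕ) : 0 < cc α k := by
  unfold cc; split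
  · exact Nat.factorial_pos _
  · exact one_pos

lemma DD_pos (α : ℕ → Bool) (n : ℕ) : 0 < DD α n :=
  Finset.prod_pos fun k _ => cc_pos α k

lemma DD_ne_zero (α : ℕ → Bool) (n : ℕ) : ((DD α n : ℚ)) ≠ 0 := by
  exact_mod_cast (DD_pos α n).ne'

lemma DD_dvd (α : ℕ → Bool) {m n : ℕ} (h : m ≤ n) : DD α m ∣ DD α n :=
  Finset.prod_dvd_prod_of_subset _ _ _ (Finset.range_subset_range.mpr h)

lemma DD_succ (α : ℕ → Bool) (n : ℕ) : DD α (n + 1) = DD α n * cc α n :=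
  Finset.prod_range_succ _ _

lemma DD_congr {α β : ℕ → Bool} {n : ℕ} (h : ∀ k < n, α k = β k) : DD α n = DD β n := by
  unfold DD
  refine Finset.prod_congr rfl fun k hk => ?_
  unfold cc
  rw [h k (Finset.mem_range.mp hk)]

lemma DD_stab {α : ℕ → Bool} {N : ℕ} (h : ∀ k, N ≤ k → α k = false) :
    ∀ j, N ≤ j → DD α j = DD α N := by
  intro j hj
  induction j, hj using Nat.le_induction with
  | base => rfl
  | succ n hn ih =>
    rw [DD_succ, ih]
    unfold cc
    rw [h n hn]
    simp

noncomputable def phi (α : ℕ → Bool) : (ℕ →₀ ℤ) →+ ℚ :=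
  Finsupp.liftAddHom fun n => zmultiplesHom ℚ ((DD α n : ℚ))⁻¹

lemma phi_single (α : ℕ → Bool) (n : ℕ) (z : ℤ) :
    phi α (Finsupp.single n z) = z / DD α n := by
  simp [phi, zsmul_eq_mul, div_eq_mul_inv]

lemma phi_apply (α : ℕ → Bool) (x : ℕ →₀ ℤ) :
    phi α x = ∑ j ∈ x.support, (x j : ℚ) / DD α j := by
  rw [phi, Finsupp.liftAddHom_apply]
  simp [Finsupp.sum, zsmul_eq_mul, div_eq_mul_inv]

lemma phi_congr {α β : ℕ → Bool} {B : ℕ} (x : ℕ →₀ ℤ)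
    (h : ∀ k < B, α k = β k) (hx : ∀ j ∈ x.support, j < B) :
    phi α x = phi β x := by
  rw [phi_apply, phi_apply]
  refine Finset.sum_congr rfl fun j hj => ?_
  rw [DD_congr (fun k hk => h k (lt_trans hk (hx j hj)))]

lemma phi_int {α : ℕ → Bool} {x : ℕ →₀ ℤ} {N : ℕ}
    (h : ∀ j ∈ x.support, DD α j ∣ DD α N) :
    ∃ m : ℤ, phi α x = m / DD α N := by
  refine ⟨∑ j ∈ x.support, x j * ((DD α N / DD α j : ℕ) : ℤ), ?_⟩
  rw [phi_apply, Int.cast_sum, Finset.sum_div]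
  refine Finset.sum_congr rfl fun j hj => ?_
  rw [Int.cast_mul, Int.cast_natCast, Nat.cast_div (h j hj) (DD_ne_zero α j)]
  have h1 := DD_ne_zero α j
  have h2 := DD_ne_zero α N
  field_simp

lemma mem_ker_iff (α : ℕ → Bool) (b x : ℕ →₀ ℤ) (n : ℕ) :
    n • b - x ∈ (phi α).ker ↔ (n : ℚ) * phi α b = phi α x := by
  rw [AddMonoidHom.mem_ker, map_sub, map_nsmul, sub_eq_zero, nsmul_eq_mul]

lemma key_div {α : ℕ → Bool} (h : {n : ℕ | α n = true}.Infinite) :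
    ∀ x : ℕ →₀ ℤ, ∀ n : ℕ, 1 ≤ n → ∃ b : ℕ →₀ ℤ, (n : ℚ) * phi α b = phi α x := by
  intro x n hn
  set N := x.support.sup id with hN
  obtain ⟨k, hk, hkgt⟩ := h.exists_gt (max N n)
  have hαk : α k = true := hk
  have hNk : N < k := lt_of_le_of_lt (le_max_left _ _) hkgt
  have hnk : n ≤ k + 1 := le_of_lt (lt_trans (lt_of_le_of_lt (le_max_right _ _) hkgt) (Nat.lt_succ_self _))
  obtain ⟨m, hm⟩ := phi_int (α := α) (x := x) (N := k)
    (fun j hj => DD_dvd α (le_of_lt (lt_of_le_of_lt (Finset.le_sup (f := id) hj) hNk)))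
  have hfac : n ∣ (k + 1).factorial := Nat.dvd_factorial hn hnk
  set t := (k + 1).factorial / n with ht
  have hnt : n * t = (k + 1).factorial := Nat.mul_div_cancel' hfac
  refine ⟨Finsupp.single (k + 1) (m * (t : ℤ)), ?_⟩
  rw [phi_single, hm, DD_succ]
  have hcc : cc α k = (k + 1).factorial := by unfold cc; rw [hαk]; simp
  rw [hcc]
  have h1 : (DD α k : ℚ) ≠ 0 := DD_ne_zero α k
  have h2 : ((k + 1).factorial : ℚ) ≠ 0 := by exact_mod_cast (Nat.factorial_pos _).ne'
  have hnt' : (n : ℚ) * (t : ℚ) = ((k + 1).factorial : ℚ) := by exact_mod_cast hnt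
  field_simp
  push_cast
  linear_combination (m : ℚ) * (DD α k : ℚ) * hnt'

lemma key_nondiv {α : ℕ → Bool} (h : {n : ℕ | α n = true}.Finite) :
    ¬ (∀ x : ℕ →₀ ℤ, ∀ n : ℕ, 1 ≤ n → ∃ b : ℕ →₀ ℤ, (n : ℚ) * phi α b = phi α x) := by
  obtain ⟨N, hN⟩ := h.bddAbove
  have hfalse : ∀ k, N + 1 ≤ k → α k = false := by
    intro k hk
    by_contra hc
    have : α k = true := by simpa using hc
    have := hN this
    omega
  set M := N + 1 with hM
  have hst : ∀ j, DD α j ∣ DD α M := by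
    intro j
    rcases le_or_gt j M with hj | hj
    · exact DD_dvd α hj
    · rw [DD_stab hfalse j (le_of_lt hj)]
  intro hdiv
  obtain ⟨b, hb⟩ := hdiv (Finsupp.single 0 1) (DD α M + 1) (by omega)
  obtain ⟨m, hm⟩ := phi_int (α := α) (x := b) (N := M) (fun j _ => hst j)
  rw [hm, phi_single] at hb
  have hD0 : DD α 0 = 1 := rfl
  rw [hD0] at hb
  have h1 : (DD α M : ℚ) ≠ 0 := DD_ne_zero α M
  have key : ((DD α M : ℤ) + 1) * m = (DD α M : ℤ) := by
    have : ((DD α M : ℚ) + 1) * m = (DD α M : ℚ) := by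
      field_simp at hb
      push_cast at hb
      linarith [hb]
    exact_mod_cast this
  have hpos : 1 ≤ (DD α M : ℤ) := by exact_mod_cast DD_pos α M
  rcases le_or_gt m 0 with hm' | hm'
  · nlinarith
  · nlinarith

end Pi02Aux

open Pi02Aux

/-- (a) Divisibility is a `Gδ` class in the coding of countable abelian groups by
subgroups of `ℕ →₀ ℤ`; (b) it is `Π⁰₂`-hard: the canonical `Π⁰₂`-complete set of
binary sequences with infinitely many `true` values continuously reduces to it. -/
theorem divisible_quotient_pi02_complete :
    (IsGδ {χ : (ℕ →₀ ℤ) → Bool |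
      ∃ H : AddSubgroup (ℕ →₀ ℤ),
        (H : Set (ℕ →₀ ℤ)) = {x : ℕ →₀ ℤ | χ x = true} ∧
        IsDivisibleGroup ((ℕ →₀ ℤ) ⧸ H)}) ∧
    (∃ f : (ℕ → Bool) → ((ℕ →₀ ℤ) → Bool), Continuous f ∧
      ∀ α : ℕ → Bool, ∃ J : AddSubgroup (ℕ →₀ ℤ),
        (J : Set (ℕ →₀ ℤ)) = {x : ℕ →₀ ℤ | f α x = true} ∧
        (IsDivisibleGroup ((ℕ →₀ ℤ) ⧸ J) ↔ {n : ℕ | α n = true}.Infinite)) := by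
  constructor
  · -- part (a)
    have hset : {χ : (ℕ →₀ ℤ) → Bool |
        ∃ H : AddSubgroup (ℕ →₀ ℤ),
          (H : Set (ℕ →₀ ℤ)) = {x : ℕ →₀ ℤ | χ x = true} ∧
          IsDivisibleGroup ((ℕ →₀ ℤ) ⧸ H)} =
        ({χ : (ℕ →₀ ℤ) → Bool | χ 0 = true} ∩
          ⋂ p : (ℕ →₀ ℤ) × (ℕ →₀ ℤ),
            {χ : (ℕ →₀ ℤ) → Bool | χ p.1 = true → χ p.2 = true → χ (p.1 - p.2) = true}) ∩
        ⋂ q : (ℕ →₀ ℤ) × ℕ,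
          {χ : (ℕ →₀ ℤ) → Bool | 1 ≤ q.2 → ∃ b : ℕ →₀ ℤ, χ (q.2 • b - q.1) = true} := by
      ext χ
      simp only [Set.mem_setOf_eq, Set.mem_inter_iff, Set.mem_iInter, Prod.forall]
      constructor
      · rintro ⟨H, hH, hdiv⟩
        have hmem : ∀ z : ℕ →₀ ℤ, z ∈ H ↔ χ z = true := fun z => Set.ext_iff.mp hH z
        refine ⟨⟨(hmem 0).mp H.zero_mem, fun a b ha hb =>
          (hmem _).mp (H.sub_mem ((hmem a).mpr ha) ((hmem b).mpr hb))⟩, ?_⟩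
        intro a n hn
        obtain ⟨b, hb⟩ := (div_quot_iff H).mp hdiv a n hn
        exact ⟨b, (hmem _).mp hb⟩
      · rintro ⟨⟨h0, hsub⟩, hdivc⟩
        refine ⟨{ carrier := {x : ℕ →₀ ℤ | χ x = true},
                  zero_mem' := h0,
                  add_mem' := ?_,
                  neg_mem' := ?_ }, rfl, ?_⟩
        · intro x y hx hy
          have h1 : χ (0 - y) = true := hsub 0 y h0 hy
          have h2 : χ (x - (0 - y)) = true := hsub x (0 - y) hx h1
          simpa [zero_sub, sub_neg_eq_add] using h2
        · intro x hx
          simpa [zero_sub] using hsub 0 x h0 hx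
        · refine (div_quot_iff _).mpr fun x n hn => ?_
          obtain ⟨b, hb⟩ := hdivc x n hn
          exact ⟨b, hb⟩
    rw [hset]
    refine IsGδ.inter (IsGδ.inter ?_ ?_) ?_
    · have hc : Continuous fun χ : (ℕ →₀ ℤ) → Bool => χ 0 := continuous_apply 0
      exact (hc.isOpen_preimage {v : Bool | v = true} (isOpen_discrete _)).isGδ
    · refine IsGδ.iInter fun p => IsOpen.isGδ ?_
      have hc : Continuous fun χ : (ℕ →₀ ℤ) → Bool =>
          ((χ p.1, χ p.2, χ (p.1 - p.2)) : Bool × Bool × Bool) :=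
        (continuous_apply p.1).prodMk
          ((continuous_apply p.2).prodMk (continuous_apply (p.1 - p.2)))
      exact hc.isOpen_preimage
        {v : Bool × Bool × Bool | v.1 = true → v.2.1 = true → v.2.2 = true}
        (isOpen_discrete _)
    · refine IsGδ.iInter fun q => IsOpen.isGδ ?_
      rcases Nat.eq_zero_or_pos q.2 with h | h
      · have : {χ : (ℕ →₀ ℤ) → Bool | 1 ≤ q.2 → ∃ b : ℕ →₀ ℤ, χ (q.2 • b - q.1) = true} =
            Set.univ := by
          ext χ; simp [h]
        rw [this]; exact isOpen_univ
      · have h1 : 1 ≤ q.2 := h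
        have : {χ : (ℕ →₀ ℤ) → Bool | 1 ≤ q.2 → ∃ b : ℕ →₀ ℤ, χ (q.2 • b - q.1) = true} =
            ⋃ b : ℕ →₀ ℤ, {χ : (ℕ →₀ ℤ) → Bool | χ (q.2 • b - q.1) = true} := by
          ext χ; simp [h1]
        rw [this]
        refine isOpen_iUnion fun b => ?_
        have hc : Continuous fun χ : (ℕ →₀ ℤ) → Bool => χ (q.2 • b - q.1) := continuous_apply _
        exact hc.isOpen_preimage {v : Bool | v = true} (isOpen_discrete _)
  · -- part (b)
    classical
    refine ⟨fun α x => decide (phi α x = 0), ?_, ?_⟩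
    · refine continuous_pi fun x => ?_
      set B := x.support.sup id + 1 with hB
      have hfac : (fun α : ℕ → Bool => decide (phi α x = 0)) =
          (fun v : Fin B → Bool =>
            decide (phi (fun k => if h : k < B then v ⟨k, h⟩ else false) x = 0)) ∘
          (fun α (i : Fin B) => α i.val) := by
        funext α
        simp only [Function.comp_apply]
        refine decide_eq_decide.mpr ?_
        have hphi : phi α x =
            phi (fun k => if h : k < B then (fun i : Fin B => α i.val) ⟨k, h⟩ else false) x := by
          refine phi_congr (B := B) x (fun k hk => by rw [dif_pos hk]) (fun j hj => ?_)
          exact lt_of_le_of_lt (Finset.le_sup (f := id) hj) (Nat.lt_succ_self _)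
        exact iff_of_eq (congrArg (fun q : ℚ => q = 0) hphi)
      rw [hfac]
      exact Continuous.comp continuous_of_discreteTopology
        (continuous_pi fun i => continuous_apply i.val)
    · intro α
      refine ⟨(phi α).ker, ?_, ?_⟩
      · ext x
        simp [AddMonoidHom.mem_ker]
      · constructor
        · intro hdiv
          by_contra hfin
          refine key_nondiv (Set.not_infinite.mp hfin) fun x n hn => ?_
          obtain ⟨b, hb⟩ := (div_quot_iff _).mp hdiv x n hn
          exact ⟨b, (mem_ker_iff α b x n).mp hb⟩
        · intro hinf
          refine (div_quot_iff _).mpr fun x n hn => ?_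
          obtain ⟨b, hb⟩ := key_div hinf x n hn
          exact ⟨b, (mem_ker_iff α b x n).mpr hb⟩
end

section
/- Let B be a unital C*-algebra and let D ⊆ B be a dense subset. Then B contains a non-unitary isometry (an element w with w* w = 1 and w w* ≠ 1) if and only if there exists v ∈ D with ‖v* v − 1‖ < 1/4 and ‖v v* − 1‖ > 1/2. -/
/-- A unital C*-algebra contains a non-unitary isometry iff a dense subset contains an
approximate witness: `‖v*v - 1‖ < 1/4` and `‖vv* - 1‖ > 1/2`. -/
theorem nonunitary_isometry_iff_dense_witness {B : Type*} [NormedRing B] [StarRing B]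
    [CStarRing B] [NormedAlgebra ℂ B] [StarModule ℂ B] [CompleteSpace B]
    (D : Set B) (hD : Dense D) :
    (∃ w : B, star w * w = 1 ∧ w * star w ≠ 1) ↔
      ∃ v ∈ D, ‖star v * v - 1‖ < 1 / 4 ∧ 1 / 2 < ‖v * star v - 1‖ := by
  constructor
  · rintro ⟨w, hw1, hw2⟩
    have hcont1 : Continuous fun v : B => ‖star v * v - 1‖ := by fun_prop
    have hcont2 : Continuous fun v : B => ‖v * star v - 1‖ := by fun_prop
    have hopen : IsOpen {v : B | ‖star v * v - 1‖ < 1 / 4 ∧ 1 / 2 < ‖v * star v - 1‖} :=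
      (isOpen_lt hcont1 continuous_const).inter (isOpen_lt continuous_const hcont2)
    have hq : ‖w * star w - 1‖ = 1 := by
      set q : B := 1 - w * star w with hqdef
      have hq0 : q ≠ 0 := by
        simpa [hqdef, sub_eq_zero] using fun h => hw2 h.symm
      have hqsa : star q = q := by
        simp [hqdef, star_sub, mul_assoc]
      have hqidem : q * q = q := by
        simp only [hqdef, sub_mul, mul_sub, one_mul, mul_one]
        rw [mul_assoc, ← mul_assoc (star w) w, hw1, one_mul, sub_self, sub_zero]
      have hnorm : ‖q‖ * ‖q‖ = ‖q‖ := by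
        rw [← CStarRing.norm_star_mul_self (x := q), hqsa, hqidem]
      have hq1 : ‖q‖ = 1 := by
        have h0 : 0 < ‖q‖ := norm_pos_iff.mpr hq0
        nlinarith
      calc ‖w * star w - 1‖ = ‖-q‖ := by rw [hqdef, neg_sub]
        _ = 1 := by rw [norm_neg, hq1]
    have hmem : w ∈ {v : B | ‖star v * v - 1‖ < 1 / 4 ∧ 1 / 2 < ‖v * star v - 1‖} := by
      refine ⟨?_, by rw [hq]; norm_num⟩
      rw [hw1, sub_self, norm_zero]
      norm_num
    obtain ⟨v, hvD, hv⟩ := hD.exists_mem_open hopen ⟨w, hmem⟩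
    exact ⟨v, hvD, hv.1, hv.2⟩
  · rintro ⟨v, -, hv1, hv2⟩
    by_contra hno
    push_neg at hno
    letI : CStarAlgebra B :=
      { ‹NormedRing B›, ‹StarRing B›, ‹CompleteSpace B›, ‹CStarRing B›,
        ‹NormedAlgebra ℂ B›, ‹StarModule ℂ B› with }
    rcases subsingleton_or_nontrivial B with hsub | hnt
    · have : v * star v - 1 = 0 := Subsingleton.elim _ _
      rw [this, norm_zero] at hv2
      norm_num at hv2
    set a : B := star v * v with ha
    have haSA : IsSelfAdjoint a := IsSelfAdjoint.star_mul_self v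
    have hspec : ∀ x ∈ spectrum ℝ a, (3/4 : ℝ) < x := by
      intro x hx
      have hx1 : x - 1 ∈ spectrum ℝ (a - algebraMap ℝ B 1) := by
        rw [← spectrum.sub_singleton_eq]
        exact Set.sub_mem_sub hx rfl
      have hle := spectrum.norm_le_norm_of_mem hx1
      rw [map_one] at hle
      have habs : |x - 1| < 1/4 := lt_of_le_of_lt (by simpa using hle) hv1
      have := abs_lt.mp habs
      linarith [this.1]
    set f : ℝ → ℝ := fun x => (Real.sqrt x)⁻¹ with hf
    have hfcont : ContinuousOn f (spectrum ℝ a) := by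
      apply ContinuousOn.inv₀ Real.continuous_sqrt.continuousOn
      intro x hx
      have := hspec x hx
      positivity
    set b : B := cfc f a with hb
    have hbSA : IsSelfAdjoint b := cfc_predicate f a
    have hbab : b * a * b = 1 := by
      have h1 : a * b = cfc (fun x => x * f x) a := by
        conv_lhs => rw [← cfc_id' ℝ a, hb]
        exact (cfc_mul (fun x : ℝ => x) f a continuous_id.continuousOn hfcont).symm
      have h2 : b * (a * b) = cfc (fun x => f x * (x * f x)) a := by
        rw [h1, hb]
        exact (cfc_mul f (fun x : ℝ => x * f x) a hfcont (continuous_id.continuousOn.mul hfcont)).symm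
      rw [mul_assoc, h2, ← cfc_one ℝ a]
      apply cfc_congr
      intro x hx
      have hx34 := hspec x hx
      have hxpos : (0:ℝ) < x := by linarith
      have hs : Real.sqrt x ≠ 0 := by positivity
      show (Real.sqrt x)⁻¹ * (x * (Real.sqrt x)⁻¹) = 1
      rw [← mul_assoc]
      field_simp
      rw [Real.sq_sqrt hxpos.le]
    have hbunit : IsUnit b := by
      rw [hb]
      refine (isUnit_cfc_iff f a hfcont haSA).mpr fun x hx => ?_
      have := hspec x hx
      have hxpos : (0:ℝ) < x := by linarith
      simp only [hf, ne_eq, inv_eq_zero]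
      positivity
    set w : B := v * b with hw
    have hww : star w * w = 1 := by
      have : star w * w = b * a * b := by
        rw [hw, star_mul, hbSA.star_eq, ha]
        noncomm_ring
      rw [this, hbab]
    have hwwstar : w * star w = 1 := hno w hww
    have hwunit : IsUnit w := ⟨⟨w, star w, hwwstar, hww⟩, rfl⟩
    obtain ⟨bu, hbu⟩ := hbunit
    have hvunit : IsUnit v := by
      have hveq : v = w * ↑bu⁻¹ := by
        rw [hw, mul_assoc, ← hbu, Units.mul_inv, mul_one]
      rw [hveq]
      exact hwunit.mul bu⁻¹.isUnit
    obtain ⟨u, hu⟩ := hvunit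
    have h2 : v * (↑u⁻¹ : B) = 1 := by rw [← hu]; exact u.mul_inv
    have hconj : v * star v - 1 = ↑u * (star v * v - 1) * ↑u⁻¹ := by
      have : (↑u : B) * (star v * v - 1) * ↑u⁻¹
          = (v * star v) * (v * ↑u⁻¹) - v * ↑u⁻¹ := by
        rw [hu]; noncomm_ring
      rw [this, h2, mul_one]
    have hx : IsSelfAdjoint (star v * v - 1) :=
      (IsSelfAdjoint.star_mul_self v).sub (IsSelfAdjoint.one B)
    have hy : IsSelfAdjoint (v * star v - 1) :=
      (IsSelfAdjoint.mul_star_self v).sub (IsSelfAdjoint.one B)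
    have hspeq : spectrum ℂ (v * star v - 1) = spectrum ℂ (star v * v - 1) := by
      rw [hconj, spectrum.units_conjugate]
    have hnn : ‖v * star v - 1‖₊ = ‖star v * v - 1‖₊ := by
      have e1 := hy.spectralRadius_eq_nnnorm
      have e2 := hx.spectralRadius_eq_nnnorm
      have : spectralRadius ℂ (v * star v - 1) = spectralRadius ℂ (star v * v - 1) := by
        unfold spectralRadius
        rw [hspeq]
      rw [e1, e2] at this
      exact_mod_cast this
    have hnorm_eq : ‖v * star v - 1‖ = ‖star v * v - 1‖ := congrArg NNReal.toReal hnn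
    rw [hnorm_eq, ← ha] at hv2
    linarith
end

section
/- Let M be an additive commutative monoid, G an additive commutative group, and ι : M →+ G an additive monoid homomorphism satisfying: (i) for all a, b ∈ M, ι a = ι b if and only if there exists c ∈ M with a + c = b + c; and (ii) every element of G has the form ι a − ι b for some a, b ∈ M (so ι is a Grothendieck group map of M). Let ν : ℕ → M be surjective. Write e_n for the standard generator single n 1 of the free abelian group ℕ →₀ ℤ, let π : (ℕ →₀ ℤ) →+ G be the unique additive homomorphism with π(e_n) = ι(ν n) for all n, and let H be the additive subgroup of ℕ →₀ ℤ generated by the set {e_n : ν n = 0} ∪ {e_m − e_n : ν m = ν n} ∪ {e_m + e_n − e_k : ν m + ν n = ν k}. Then π is surjective and the kernel of π equals H; in particular (ℕ →₀ ℤ) ⧸ H is isomorphic to G, the Grothendieck group of M. -/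
/-- Presenting the Grothendieck group of a commutative monoid from countable semigroup
data: if `ι : M →+ G` is a Grothendieck group map, `ν : ℕ → M` is surjective,
`π : (ℕ →₀ ℤ) →+ G` sends the standard generator `e_n` to `ι (ν n)`, and `H` is the
subgroup generated by the zero-, equality-, and addition-relations, then `π` is
surjective with kernel `H`; in particular `(ℕ →₀ ℤ) ⧸ H ≅ G`. -/
theorem grothendieck_presentation {M : Type*} [AddCommMonoid M]
    {G : Type*} [AddCommGroup G] (ι : M →+ G)
    (hι₁ : ∀ a b : M, ι a = ι b ↔ ∃ c : M, a + c = b + c)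
    (hι₂ : ∀ g : G, ∃ a b : M, g = ι a - ι b)
    (ν : ℕ → M) (hν : Function.Surjective ν)
    (π : (ℕ →₀ ℤ) →+ G) (hπ : ∀ n : ℕ, π (Finsupp.single n 1) = ι (ν n))
    (H : AddSubgroup (ℕ →₀ ℤ))
    (hH : H = AddSubgroup.closure
      ({x : ℕ →₀ ℤ | ∃ n, ν n = 0 ∧ x = Finsupp.single n 1} ∪
       {x : ℕ →₀ ℤ | ∃ m n, ν m = ν n ∧
          x = Finsupp.single m 1 - Finsupp.single n 1} ∪
       {x : ℕ →₀ ℤ | ∃ m n k, ν m + ν n = ν k ∧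
          x = Finsupp.single m 1 + Finsupp.single n 1 - Finsupp.single k 1})) :
    Function.Surjective π ∧ π.ker = H ∧ Nonempty (((ℕ →₀ ℤ) ⧸ H) ≃+ G) := by
  have hmem2 : ∀ m n, ν m = ν n →
      Finsupp.single m 1 - Finsupp.single n 1 ∈ H := by
    intro m n h
    rw [hH]
    exact AddSubgroup.subset_closure (Or.inl (Or.inr ⟨m, n, h, rfl⟩))
  have hmem3 : ∀ m n k, ν m + ν n = ν k →
      Finsupp.single m 1 + Finsupp.single n 1 - Finsupp.single k 1 ∈ H := by
    intro m n k h
    rw [hH]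
    exact AddSubgroup.subset_closure (Or.inr ⟨m, n, k, h, rfl⟩)
  have hsurj : Function.Surjective π := by
    intro g
    obtain ⟨a, b, rfl⟩ := hι₂ g
    obtain ⟨m, rfl⟩ := hν a
    obtain ⟨n, rfl⟩ := hν b
    exact ⟨Finsupp.single m 1 - Finsupp.single n 1, by simp [map_sub, hπ]⟩
  have hHker : H ≤ π.ker := by
    rw [hH, AddSubgroup.closure_le]
    rintro x ((⟨n, h0, rfl⟩ | ⟨m, n, h, rfl⟩) | ⟨m, n, k, h, rfl⟩) <;>
      simp only [SetLike.mem_coe, AddMonoidHom.mem_ker, map_sub, map_add, hπ]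
    · rw [h0, map_zero]
    · rw [h, sub_self]
    · rw [← map_add, h, sub_self]
  -- every element is congruent mod H to a difference of generators
  have key : ∀ x : ℕ →₀ ℤ, ∃ m n,
      x - (Finsupp.single m 1 - Finsupp.single n 1) ∈ H := by
    intro x
    induction x using Finsupp.induction_linear with
    | zero => exact ⟨0, 0, by simpa using H.zero_mem⟩
    | add f g hf hg =>
      obtain ⟨m, n, hmn⟩ := hf
      obtain ⟨p, q, hpq⟩ := hg
      obtain ⟨r, hr⟩ := hν (ν m + ν p)
      obtain ⟨s, hs⟩ := hν (ν n + ν q)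
      refine ⟨r, s, ?_⟩
      have h3a := hmem3 m p r hr.symm
      have h3b := hmem3 n q s hs.symm
      have heq : f + g - (Finsupp.single r 1 - Finsupp.single s 1) =
          ((f - (Finsupp.single m 1 - Finsupp.single n 1)) +
           (g - (Finsupp.single p 1 - Finsupp.single q 1))) +
          ((Finsupp.single m 1 + Finsupp.single p 1 - Finsupp.single r 1) -
           (Finsupp.single n 1 + Finsupp.single q 1 - Finsupp.single s 1)) := by
        abel
      rw [heq]
      exact H.add_mem (H.add_mem hmn hpq) (H.sub_mem h3a h3b)
    | single a b =>
      induction b using Int.induction_on with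
      | zero => exact ⟨0, 0, by simpa using H.zero_mem⟩
      | succ i ih =>
        obtain ⟨m, n, h⟩ := ih
        obtain ⟨r, hr⟩ := hν (ν m + ν a)
        refine ⟨r, n, ?_⟩
        have h3 := hmem3 m a r hr.symm
        have heq : Finsupp.single a ((i : ℤ) + 1) -
            (Finsupp.single r 1 - Finsupp.single n 1) =
            (Finsupp.single a (i : ℤ) -
              (Finsupp.single m 1 - Finsupp.single n 1)) +
            (Finsupp.single m 1 + Finsupp.single a 1 - Finsupp.single r 1) := by
          rw [Finsupp.single_add]
          abel
        rw [heq]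
        exact H.add_mem h h3
      | pred i ih =>
        obtain ⟨m, n, h⟩ := ih
        obtain ⟨s, hs⟩ := hν (ν n + ν a)
        refine ⟨m, s, ?_⟩
        have h3 := hmem3 n a s hs.symm
        have heq : Finsupp.single a (-(i : ℤ) - 1) -
            (Finsupp.single m 1 - Finsupp.single s 1) =
            (Finsupp.single a (-(i : ℤ)) -
              (Finsupp.single m 1 - Finsupp.single n 1)) -
            (Finsupp.single n 1 + Finsupp.single a 1 - Finsupp.single s 1) := by
          have hsplit : Finsupp.single a (-(i : ℤ) - 1) =
              Finsupp.single a (-(i : ℤ)) - Finsupp.single a 1 := by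
            rw [← Finsupp.single_sub]
          rw [hsplit]
          abel
        rw [heq]
        exact H.sub_mem h h3
  have hker : π.ker = H := by
    refine le_antisymm ?_ hHker
    intro x hx
    obtain ⟨m, n, h⟩ := key x
    have hd : π (Finsupp.single m 1 - Finsupp.single n 1) = 0 := by
      have h1 : π (x - (Finsupp.single m 1 - Finsupp.single n 1)) = 0 := hHker h
      rw [map_sub] at h1
      rw [AddMonoidHom.mem_ker] at hx
      rw [hx, zero_sub, neg_eq_zero] at h1
      exact h1
    rw [map_sub, hπ, hπ, sub_eq_zero] at hd
    obtain ⟨c, hc⟩ := (hι₁ _ _).mp hd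
    obtain ⟨k, rfl⟩ := hν c
    obtain ⟨j, hj⟩ := hν (ν m + ν k)
    have h3a := hmem3 m k j hj.symm
    have h3b := hmem3 n k j (by rw [← hc]; exact hj.symm)
    have hmn : Finsupp.single m 1 - Finsupp.single n 1 ∈ H := by
      have heq : Finsupp.single m (1 : ℤ) - Finsupp.single n 1 =
          (Finsupp.single m 1 + Finsupp.single k 1 - Finsupp.single j 1) -
          (Finsupp.single n 1 + Finsupp.single k 1 - Finsupp.single j 1) := by
        abel
      rw [heq]
      exact H.sub_mem h3a h3b
    have : x = (x - (Finsupp.single m 1 - Finsupp.single n 1)) +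
        (Finsupp.single m 1 - Finsupp.single n 1) := by abel
    rw [this]
    exact H.add_mem h hmn
  exact ⟨hsurj, hker, ⟨hker ▸ QuotientAddGroup.quotientKerEquivOfSurjective π hsurj⟩⟩
end
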